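/- Let M ≥ 1, q ∈ (0,1), ε ∈ {−1,1}, and F = [[0, q·I_M], [ε·q^{-1}·I_M, 0]] ∈ M_{2M}(ℂ). The quotient of Pol(O_F^+) by the two-sided *-ideal generated by {u_{jk} : M+1 ≤ j ≤ 2M, 1 ≤ k ≤ M} is *-isomorphic to Pol(U_M^+), via a unital *-algebra isomorphism sending the class of u_{jk} to the generator u_{jk} of Pol(U_M^+) for 1 ≤ j,k ≤ M. -/

import Mathlib

open scoped ComplexOrder

/-- The defining relations of `Pol(O_F⁺)`: `U` is unitary and `U·F = F·conj(U)`
(equivalently `U = F·conj(U)·F⁻¹`). -/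
def OrthRel {ι : Type} [Fintype ι] [DecidableEq ι] {A : Type} [Ring A] [Algebra ℂ A]
    [StarRing A] (F : Matrix ι ι ℂ) (u : Matrix ι ι A) : Prop :=
  u * u.conjTranspose = 1 ∧ u.conjTranspose * u = 1 ∧
    u * F.map (algebraMap ℂ A) = F.map (algebraMap ℂ A) * u.map star

/-- A presentation of the universal unital complex *-algebra `Pol(O_F⁺)`:
a unital complex *-algebra carrying a matrix of generators `u` satisfying the
defining relations, universal among all such. -/
structure PolO {ι : Type} [Fintype ι] [DecidableEq ι] (F : Matrix ι ι ℂ) where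
  carrier : Type
  [isRing : Ring carrier]
  [isAlgebra : Algebra ℂ carrier]
  [isStarRing : StarRing carrier]
  [isStarModule : StarModule ℂ carrier]
  u : Matrix ι ι carrier
  rel : OrthRel F u
  universal : ∀ (B : Type) [Ring B] [Algebra ℂ B] [StarRing B] [StarModule ℂ B]
      (v : Matrix ι ι B), OrthRel F v →
      ∃! φ : carrier →⋆ₐ[ℂ] B, ∀ j k, φ (u j k) = v j k

attribute [instance] PolO.isRing PolO.isAlgebra PolO.isStarRing PolO.isStarModule

/-- The defining relations of `Pol(U_N⁺)`: both `U` and `conj(U)` are unitary. -/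
def BiUnitary {ι : Type} [Fintype ι] [DecidableEq ι] {A : Type} [Ring A] [Algebra ℂ A]
    [StarRing A] (u : Matrix ι ι A) : Prop :=
  u * u.conjTranspose = 1 ∧ u.conjTranspose * u = 1 ∧
    u.map star * (u.map star).conjTranspose = 1 ∧ (u.map star).conjTranspose * u.map star = 1

/-- A presentation of the universal unital complex *-algebra `Pol(U_N⁺)` (`N = #ι`). -/
structure PolU (ι : Type) [Fintype ι] [DecidableEq ι] where
  carrier : Type
  [isRing : Ring carrier]
  [isAlgebra : Algebra ℂ carrier]
  [isStarRing : StarRing carrier]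
  [isStarModule : StarModule ℂ carrier]
  u : Matrix ι ι carrier
  rel : BiUnitary u
  universal : ∀ (B : Type) [Ring B] [Algebra ℂ B] [StarRing B] [StarModule ℂ B]
      (v : Matrix ι ι B), BiUnitary v →
      ∃! φ : carrier →⋆ₐ[ℂ] B, ∀ j k, φ (u j k) = v j k

attribute [instance] PolU.isRing PolU.isAlgebra PolU.isStarRing PolU.isStarModule

/-- A unital complex *-algebra is RFD if finite-dimensional *-representations
separate its points. -/
def IsRFD (A : Type) [Ring A] [Algebra ℂ A] [StarRing A] : Prop :=
  ∀ a : A, a ≠ 0 → ∃ (n : ℕ) (π : A →⋆ₐ[ℂ] Matrix (Fin n) (Fin n) ℂ), π a ≠ 0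

/-- A tracial state on a unital complex *-algebra. -/
structure TracialState (A : Type) [Ring A] [Algebra ℂ A] [StarRing A] where
  toFun : A →ₗ[ℂ] ℂ
  map_one' : toFun 1 = 1
  nonneg' : ∀ a : A, 0 ≤ toFun (star a * a)
  tracial' : ∀ a b : A, toFun (a * b) = toFun (b * a)

/-- The Kac ideal: elements killed by `τ(a^* a)` for every tracial state `τ`. -/
def kacIdeal (A : Type) [Ring A] [Algebra ℂ A] [StarRing A] : Set A :=
  {a : A | ∀ τ : TracialState A, τ.toFun (star a * a) = 0}

/-- The RFD ideal: the intersection of the kernels of all finite-dimensional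
*-representations. -/
def rfdIdeal (A : Type) [Ring A] [Algebra ℂ A] [StarRing A] : Set A :=
  {a : A | ∀ (n : ℕ) (π : A →⋆ₐ[ℂ] Matrix (Fin n) (Fin n) ℂ), π a = 0}

/-- A subset of a *-ring which is a two-sided ideal closed under the star operation. -/
def IsStarIdeal {A : Type} [Ring A] [StarRing A] (T : Set A) : Prop :=
  (0 : A) ∈ T ∧ (∀ a b, a ∈ T → b ∈ T → a + b ∈ T) ∧
    (∀ x a, a ∈ T → x * a ∈ T ∧ a * x ∈ T) ∧ (∀ a, a ∈ T → star a ∈ T)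

/-- The two-sided *-ideal generated by a set. -/
def starIdealSpan {A : Type} [Ring A] [StarRing A] (S : Set A) : Set A :=
  ⋂₀ {T : Set A | IsStarIdeal T ∧ S ⊆ T}

/-- The matrix `F = [[0, q·I_M], [ε·q⁻¹·I_M, 0]] ∈ M_{2M}(ℂ)`. -/
noncomputable def Fqe (M : ℕ) (q ε : ℝ) : Matrix (Fin (2 * M)) (Fin (2 * M)) ℂ := fun j k =>
  if (j : ℕ) + M = (k : ℕ) then (q : ℂ)
  else if (j : ℕ) = (k : ℕ) + M then ((ε * q⁻¹ : ℝ) : ℂ) else 0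

/-- The embedding of `{1,…,M}` as the first `M` indices of `{1,…,2M}`. -/
def loIdx {M : ℕ} (j : Fin M) : Fin (2 * M) := ⟨(j : ℕ), by have := j.isLt; omega⟩

/-- The embedding of `{1,…,M}` as the last `M` indices of `{1,…,2M}` (`j ↦ j + M`). -/
def hiIdx {M : ℕ} (j : Fin M) : Fin (2 * M) := ⟨(j : ℕ) + M, by have := j.isLt; omega⟩

set_option linter.unusedSectionVars false

section Helpers

open Matrix

/-! ### Star ideal span basics -/

theorem isStarIdeal_span {A : Type} [Ring A] [StarRing A] (S : Set A) :
    IsStarIdeal (starIdealSpan S) := by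
  have hmem : ∀ a : A, a ∈ starIdealSpan S ↔
      ∀ T, (IsStarIdeal T ∧ S ⊆ T) → a ∈ T := by
    intro a; simp [starIdealSpan, Set.mem_sInter]
  refine ⟨?_, ?_, ?_, ?_⟩
  · rw [hmem]; intro T hT; exact hT.1.1
  · intro a b ha hb; rw [hmem] at *
    intro T hT; exact hT.1.2.1 a b (ha T hT) (hb T hT)
  · intro x a ha; rw [hmem] at ha
    constructor <;> rw [hmem] <;> intro T hT
    · exact (hT.1.2.2.1 x a (ha T hT)).1
    · exact (hT.1.2.2.1 x a (ha T hT)).2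
  · intro a ha; rw [hmem] at *
    intro T hT; exact hT.1.2.2.2 a (ha T hT)

theorem subset_starIdealSpan {A : Type} [Ring A] [StarRing A] (S : Set A) :
    S ⊆ starIdealSpan S := by
  intro a ha
  simp only [starIdealSpan, Set.mem_sInter, Set.mem_setOf_eq]
  exact fun T hT => hT.2 ha

theorem starIdealSpan_subset {A : Type} [Ring A] [StarRing A] {S T : Set A}
    (hT : IsStarIdeal T) (hST : S ⊆ T) : starIdealSpan S ⊆ T := by
  intro a ha
  simp only [starIdealSpan, Set.mem_sInter, Set.mem_setOf_eq] at ha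
  exact ha T ⟨hT, hST⟩

/-! ### Matrix transfer along star algebra homomorphisms -/

section Transfer

variable {ι : Type} [Fintype ι] [DecidableEq ι] {A B : Type}
  [Ring A] [Algebra ℂ A] [StarRing A] [Ring B] [Algebra ℂ B] [StarRing B]

theorem matMap_mul (f : A →⋆ₐ[ℂ] B) (m n : Matrix ι ι A) :
    (m * n).map ⇑f = m.map ⇑f * n.map ⇑f := by
  have h : ⇑f = ⇑(f : A →+* B) := rfl
  rw [h, Matrix.map_mul]

theorem matMap_one (f : A →⋆ₐ[ℂ] B) :
    (1 : Matrix ι ι A).map ⇑f = 1 :=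
  Matrix.map_one ⇑f (map_zero f) (map_one f)

theorem matMap_conjTranspose (f : A →⋆ₐ[ℂ] B) (m : Matrix ι ι A) :
    (m.map ⇑f)ᴴ = mᴴ.map ⇑f :=
  (Matrix.conjTranspose_map ⇑f (fun a => map_star f a)).symm

theorem matMap_star (f : A →⋆ₐ[ℂ] B) (m : Matrix ι ι A) :
    (m.map star).map ⇑f = (m.map ⇑f).map star := by
  ext j k; simp [Matrix.map_apply, map_star]

theorem matMap_alg (f : A →⋆ₐ[ℂ] B) (F : Matrix ι ι ℂ) :
    (F.map (algebraMap ℂ A)).map ⇑f = F.map (algebraMap ℂ B) := by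
  ext j k; simp [Matrix.map_apply]
  exact f.commutes _

theorem matMap_inj {f : A →⋆ₐ[ℂ] B} (hf : Function.Injective ⇑f)
    {m n : Matrix ι ι A} (h : m.map ⇑f = n.map ⇑f) : m = n := by
  ext j k
  exact hf (by have := congrArg (fun X => X j k) h; simpa [Matrix.map_apply] using this)

theorem orthRel_map {F : Matrix ι ι ℂ} {u : Matrix ι ι A} (f : A →⋆ₐ[ℂ] B)
    (h : OrthRel F u) : OrthRel F (u.map ⇑f) := by
  obtain ⟨h1, h2, h3⟩ := h
  refine ⟨?_, ?_, ?_⟩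
  · rw [matMap_conjTranspose, ← matMap_mul, h1, matMap_one]
  · rw [matMap_conjTranspose, ← matMap_mul, h2, matMap_one]
  · rw [← matMap_alg f F, ← matMap_mul, h3, matMap_mul, matMap_star]

theorem biUnitary_map {u : Matrix ι ι A} (f : A →⋆ₐ[ℂ] B)
    (h : BiUnitary u) : BiUnitary (u.map ⇑f) := by
  obtain ⟨h1, h2, h3, h4⟩ := h
  refine ⟨?_, ?_, ?_, ?_⟩
  · rw [matMap_conjTranspose, ← matMap_mul, h1, matMap_one]
  · rw [matMap_conjTranspose, ← matMap_mul, h2, matMap_one]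
  · rw [← matMap_star, matMap_conjTranspose, ← matMap_mul, h3, matMap_one]
  · rw [← matMap_star, matMap_conjTranspose, ← matMap_mul, h4, matMap_one]

theorem biUnitary_of_map_inj {u : Matrix ι ι A} (f : A →⋆ₐ[ℂ] B)
    (hf : Function.Injective ⇑f) (h : BiUnitary (u.map ⇑f)) : BiUnitary u := by
  obtain ⟨h1, h2, h3, h4⟩ := h
  refine ⟨?_, ?_, ?_, ?_⟩
  · refine matMap_inj hf ?_
    rw [matMap_mul, ← matMap_conjTranspose, h1, matMap_one]
  · refine matMap_inj hf ?_
    rw [matMap_mul, ← matMap_conjTranspose, h2, matMap_one]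
  · refine matMap_inj hf ?_
    rw [matMap_mul, ← matMap_conjTranspose, matMap_star, h3, matMap_one]
  · refine matMap_inj hf ?_
    rw [matMap_mul, ← matMap_conjTranspose, matMap_star, h4, matMap_one]

end Transfer

/-! ### smul cancellation -/

theorem smul_cancel_of_ne_zero {V : Type _} [AddCommMonoid V] [Module ℂ V] {c : ℂ}
    (hc : c ≠ 0) {x y : V} (h : c • x = c • y) : x = y := by
  have := congrArg (fun v => c⁻¹ • v) h
  simpa [smul_smul, inv_mul_cancel₀ hc] using this

/-! ### The index equivalence -/

def eqSum (M : ℕ) : (Fin M ⊕ Fin M) ≃ Fin (2 * M) where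
  toFun := Sum.elim loIdx hiIdx
  invFun k := if h : (k : ℕ) < M then Sum.inl ⟨k, h⟩
    else Sum.inr ⟨(k : ℕ) - M, by have := k.isLt; omega⟩
  left_inv := by
    rintro (j | j)
    · simp only [Sum.elim_inl, loIdx]
      exact dif_pos j.isLt
    · simp only [Sum.elim_inr, hiIdx]
      refine (dif_neg (show ¬ ((j : ℕ) + M < M) by omega)).trans ?_
      congr 1
      exact Fin.ext (by simp)
  right_inv := fun k => by
    by_cases h : (k : ℕ) < M
    · simp only [dif_pos h, Sum.elim_inl, loIdx]
    · simp only [dif_neg h, Sum.elim_inr, hiIdx]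
      exact Fin.ext (by have := k.isLt; simp; omega)

theorem eqSum_inl {M : ℕ} (j : Fin M) : eqSum M (Sum.inl j) = loIdx j := rfl

theorem eqSum_inr {M : ℕ} (j : Fin M) : eqSum M (Sum.inr j) = hiIdx j := rfl

theorem eqSum_symm_lo {M : ℕ} (j : Fin M) : (eqSum M).symm (loIdx j) = Sum.inl j :=
  (Equiv.symm_apply_eq _).2 rfl

theorem eqSum_symm_hi {M : ℕ} (j : Fin M) : (eqSum M).symm (hiIdx j) = Sum.inr j :=
  (Equiv.symm_apply_eq _).2 rfl

/-! ### Fqe in block form -/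

theorem fqe_submatrix (M : ℕ) (q ε : ℝ) :
    (Fqe M q ε).submatrix (eqSum M) (eqSum M) =
      Matrix.fromBlocks 0 ((q : ℂ) • 1) (((ε * q⁻¹ : ℝ) : ℂ) • 1) 0 := by
  ext j k
  rcases j with j | j <;> rcases k with k | k <;>
    simp only [Matrix.submatrix_apply, eqSum_inl, eqSum_inr, Fqe, loIdx, hiIdx,
      Matrix.fromBlocks_apply₁₁, Matrix.fromBlocks_apply₁₂, Matrix.fromBlocks_apply₂₁,
      Matrix.fromBlocks_apply₂₂, Matrix.smul_apply, Matrix.one_apply, Matrix.zero_apply]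
  · exact (if_neg (by omega)).trans (if_neg (by omega))
  · by_cases h : j = k
    · subst h; rw [if_pos (by omega)]; simp
    · refine (if_neg (by omega)).trans ((if_neg (by omega)).trans ?_); simp [h]
  · by_cases h : j = k
    · subst h; refine (if_neg (by omega)).trans ((if_pos (by omega)).trans ?_); simp
    · refine (if_neg (by omega)).trans ((if_neg (by omega)).trans ?_); simp [h]
  · exact (if_neg (by omega)).trans (if_neg (by omega))

theorem map_smul_one {ι : Type} [Fintype ι] [DecidableEq ι] {A : Type} [Ring A]
    [Algebra ℂ A] (c : ℂ) :
    ((c • 1 : Matrix ι ι ℂ)).map (algebraMap ℂ A) = c • (1 : Matrix ι ι A) := by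
  ext j k
  by_cases h : j = k <;>
    simp [Matrix.map_apply, Matrix.smul_apply, Matrix.one_apply, h,
      Algebra.algebraMap_eq_smul_one]

theorem fqe_map_submatrix (M : ℕ) (q ε : ℝ) {A : Type} [Ring A] [Algebra ℂ A] :
    (Fqe M q ε).map (algebraMap ℂ A) =
      (Matrix.fromBlocks 0 ((q : ℂ) • 1) (((ε * q⁻¹ : ℝ) : ℂ) • 1) 0).submatrix
        (eqSum M).symm (eqSum M).symm := by
  have hF : Fqe M q ε =
      (Matrix.fromBlocks 0 ((q : ℂ) • 1) (((ε * q⁻¹ : ℝ) : ℂ) • 1)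
        (0 : Matrix (Fin M) (Fin M) ℂ)).submatrix (eqSum M).symm (eqSum M).symm := by
    rw [← fqe_submatrix M q ε, Matrix.submatrix_submatrix]
    simp
  rw [hF, ← Matrix.submatrix_map]
  congr 1
  rw [Matrix.fromBlocks_map]
  simp only [map_smul_one]
  congr 1 <;> ext j k <;> simp [Matrix.map_apply]

end Helpers

section Rel3

open Matrix

theorem rel3_blocks (M : ℕ) (q ε : ℝ) {A : Type} [Ring A] [Algebra ℂ A] [StarRing A]
    {u : Matrix (Fin (2 * M)) (Fin (2 * M)) A}
    (hrel : u * (Fqe M q ε).map (algebraMap ℂ A) =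
      (Fqe M q ε).map (algebraMap ℂ A) * u.map star) :
    (((ε * q⁻¹ : ℝ) : ℂ) • (u.submatrix (eqSum M) (eqSum M)).toBlocks₁₂ =
        (q : ℂ) • ((u.submatrix (eqSum M) (eqSum M)).toBlocks₂₁).map star) ∧
    ((q : ℂ) • (u.submatrix (eqSum M) (eqSum M)).toBlocks₁₁ =
        (q : ℂ) • ((u.submatrix (eqSum M) (eqSum M)).toBlocks₂₂).map star) := by
  set e := eqSum M with he
  set G : Matrix (Fin M ⊕ Fin M) (Fin M ⊕ Fin M) A :=
    Matrix.fromBlocks 0 ((q : ℂ) • 1) (((ε * q⁻¹ : ℝ) : ℂ) • 1) 0 with hG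
  have h := congrArg (fun m => m.submatrix (⇑e) (⇑e)) hrel
  simp only [fqe_map_submatrix M q ε (A := A)] at h
  rw [← hG] at h
  rw [← Matrix.submatrix_mul_equiv u (G.submatrix ⇑e.symm ⇑e.symm) ⇑e e ⇑e,
      ← Matrix.submatrix_mul_equiv (G.submatrix ⇑e.symm ⇑e.symm) (u.map star) ⇑e e ⇑e] at h
  rw [Matrix.submatrix_submatrix, Equiv.symm_comp_self, Matrix.submatrix_id_id,
      Matrix.submatrix_map] at h
  set Ub := u.submatrix ⇑e ⇑e with hUb
  rw [← Matrix.fromBlocks_toBlocks Ub, hG, Matrix.fromBlocks_map,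
      Matrix.fromBlocks_multiply, Matrix.fromBlocks_multiply] at h
  simp only [Matrix.mul_zero, Matrix.zero_mul, Matrix.mul_smul, Matrix.smul_mul,
    mul_one, one_mul, Matrix.mul_one, Matrix.one_mul, add_zero, zero_add,
    Matrix.fromBlocks_inj] at h
  exact ⟨h.1, h.2.1⟩

end Rel3

set_option maxHeartbeats 2000000

/-- the quotient of `Pol(O_F⁺)` (with `F = [[0, q·I_M], [ε·q⁻¹·I_M, 0]]`) by the
two-sided *-ideal generated by `{u_{jk} : M+1 ≤ j ≤ 2M, 1 ≤ k ≤ M}` is *-isomorphic to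
`Pol(U_M⁺)`, the class of `u_{jk}` (`1 ≤ j,k ≤ M`) corresponding to the generator of
`Pol(U_M⁺)`.  This is expressed by a surjective unital *-homomorphism
`φ : Pol(O_F⁺) → Pol(U_M⁺)` whose kernel is exactly that ideal. -/
theorem polO_one_block_quotient_is_polU (M : ℕ) (hM : 1 ≤ M) (q ε : ℝ)
    (hq0 : 0 < q) (hq1 : q < 1) (hε : ε = 1 ∨ ε = -1) (P : PolO (Fqe M q ε))
    (B : PolU (Fin M)) :
    ∃ φ : P.carrier →⋆ₐ[ℂ] B.carrier,
      Function.Surjective φ ∧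
      (∀ j k : Fin M, φ (P.u (loIdx j) (loIdx k)) = B.u j k) ∧
      {a : P.carrier | φ a = 0} =
        starIdealSpan
          {x : P.carrier | ∃ j k : Fin (2 * M), M ≤ (j : ℕ) ∧ (k : ℕ) < M ∧ x = P.u j k} := by
  classical
  obtain ⟨hB1, hB2, hB3, hB4⟩ := B.rel
  have hq : (q : ℂ) ≠ 0 := by
    simp only [ne_eq, Complex.ofReal_eq_zero]; exact ne_of_gt hq0
  have hc : ((ε * q⁻¹ : ℝ) : ℂ) ≠ 0 := by
    simp only [ne_eq, Complex.ofReal_eq_zero]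
    rcases hε with h | h <;> rw [h] <;> simp [ne_of_gt hq0]
  set vb : Matrix (Fin M ⊕ Fin M) (Fin M ⊕ Fin M) B.carrier :=
    Matrix.fromBlocks B.u 0 0 (B.u.map star) with hvb
  set v : Matrix (Fin (2 * M)) (Fin (2 * M)) B.carrier :=
    vb.submatrix ⇑(eqSum M).symm ⇑(eqSum M).symm with hv
  have hvbstar : vb.map star = Matrix.fromBlocks (B.u.map star) 0 0 B.u := by
    rw [hvb]
    ext j k
    rcases j with j | j <;> rcases k with k | k <;>
      simp [Matrix.map_apply, Matrix.fromBlocks_apply₁₁, Matrix.fromBlocks_apply₁₂,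
        Matrix.fromBlocks_apply₂₁, Matrix.fromBlocks_apply₂₂]
  have hvbU : vb * vb.conjTranspose = 1 := by
    rw [hvb, Matrix.fromBlocks_conjTranspose, Matrix.fromBlocks_multiply]
    simp only [Matrix.conjTranspose_zero, Matrix.mul_zero, Matrix.zero_mul,
      add_zero, zero_add]
    rw [hB1, hB3, Matrix.fromBlocks_one]
  have hvbU' : vb.conjTranspose * vb = 1 := by
    rw [hvb, Matrix.fromBlocks_conjTranspose, Matrix.fromBlocks_multiply]
    simp only [Matrix.conjTranspose_zero, Matrix.mul_zero, Matrix.zero_mul,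
      add_zero, zero_add]
    rw [hB2, hB4, Matrix.fromBlocks_one]
  have hOrthv : OrthRel (Fqe M q ε) v := by
    refine ⟨?_, ?_, ?_⟩
    · rw [hv, Matrix.conjTranspose_submatrix, Matrix.submatrix_mul_equiv, hvbU,
        Matrix.submatrix_one_equiv]
    · rw [hv, Matrix.conjTranspose_submatrix, Matrix.submatrix_mul_equiv, hvbU',
        Matrix.submatrix_one_equiv]
    · rw [hv, fqe_map_submatrix M q ε, ← Matrix.submatrix_map,
        Matrix.submatrix_mul_equiv, Matrix.submatrix_mul_equiv]
      congr 1
      rw [hvbstar, hvb, Matrix.fromBlocks_multiply, Matrix.fromBlocks_multiply]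
      simp only [Matrix.mul_zero, Matrix.zero_mul, Matrix.mul_smul, Matrix.smul_mul,
        Matrix.mul_one, Matrix.one_mul, add_zero, zero_add, smul_zero]
  obtain ⟨φ, hφ, hφuniq⟩ := P.universal B.carrier v hOrthv
  have hφlo : ∀ j k : Fin M, φ (P.u (loIdx j) (loIdx k)) = B.u j k := by
    intro j k
    rw [hφ, hv, Matrix.submatrix_apply, eqSum_symm_lo, eqSum_symm_lo, hvb]
    rfl
  -- surjectivity
  have hsurj : Function.Surjective ⇑φ := by
    have hmemu : ∀ j k : Fin M, B.u j k ∈ φ.range :=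
      fun j k => ⟨P.u (loIdx j) (loIdx k), hφlo j k⟩
    set w : Matrix (Fin M) (Fin M) φ.range := fun j k => ⟨B.u j k, hmemu j k⟩ with hw
    have hwmap : w.map ⇑(φ.range).subtype = B.u := by ext j k; rfl
    have hBw : BiUnitary w := by
      refine biUnitary_of_map_inj (φ.range).subtype Subtype.coe_injective ?_
      rw [hwmap]; exact ⟨hB1, hB2, hB3, hB4⟩
    obtain ⟨ψ, hψ, -⟩ := B.universal φ.range w hBw
    obtain ⟨θ, -, hθuniq⟩ := B.universal B.carrier B.u ⟨hB1, hB2, hB3, hB4⟩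
    have h1 : (φ.range).subtype.comp ψ = θ := hθuniq _ (fun j k => by
      rw [StarAlgHom.comp_apply, hψ]; rfl)
    have h2 : StarAlgHom.id ℂ B.carrier = θ := hθuniq _ (fun j k => rfl)
    intro x
    have hx := congrArg (fun f : B.carrier →⋆ₐ[ℂ] B.carrier => f x) (h1.trans h2.symm)
    simp only [StarAlgHom.comp_apply] at hx
    obtain ⟨a, ha⟩ := (ψ x).2
    refine ⟨a, ?_⟩
    have ha' : φ a = (ψ x : B.carrier) := ha
    rw [ha']; exact hx
  -- the kernel is a star ideal containing the off-diagonal generators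
  have hker_ideal : IsStarIdeal {a : P.carrier | φ a = 0} := by
    refine ⟨by simp, ?_, ?_, ?_⟩
    · intro a b ha hb; simp only [Set.mem_setOf_eq] at *
      rw [map_add, ha, hb, add_zero]
    · intro x a ha; simp only [Set.mem_setOf_eq] at *
      exact ⟨by rw [map_mul, ha, mul_zero], by rw [map_mul, ha, zero_mul]⟩
    · intro a ha; simp only [Set.mem_setOf_eq] at *
      rw [map_star, ha, star_zero]
  set S₀ : Set P.carrier :=
    {x : P.carrier | ∃ j k : Fin (2 * M), M ≤ (j : ℕ) ∧ (k : ℕ) < M ∧ x = P.u j k} with hS₀def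
  have hS₀ker : S₀ ⊆ {a : P.carrier | φ a = 0} := by
    rintro x ⟨j, k, hj, hk, rfl⟩
    have hj' : (eqSum M).symm j = Sum.inr ⟨(j : ℕ) - M, by have := j.isLt; omega⟩ := by
      simp only [eqSum, Equiv.coe_fn_symm_mk]
      exact dif_neg (by omega)
    have hk' : (eqSum M).symm k = Sum.inl ⟨(k : ℕ), hk⟩ := by
      simp only [eqSum, Equiv.coe_fn_symm_mk]
      exact dif_pos hk
    simp only [Set.mem_setOf_eq]
    rw [hφ, hv, Matrix.submatrix_apply, hj', hk', hvb, Matrix.fromBlocks_apply₂₁]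
    rfl
  -- derived relations in P
  have hrel3 := rel3_blocks M q ε P.rel.2.2
  have hR2 : ∀ j k : Fin M, ((ε * q⁻¹ : ℝ) : ℂ) • P.u (loIdx j) (hiIdx k)
      = (q : ℂ) • star (P.u (hiIdx j) (loIdx k)) := by
    intro j k
    have h := congrArg (fun m : Matrix (Fin M) (Fin M) P.carrier => m j k) hrel3.1
    simpa only [Matrix.smul_apply, Matrix.toBlocks₁₂, Matrix.toBlocks₂₁, Matrix.map_apply,
      Matrix.submatrix_apply, Matrix.of_apply, eqSum_inl, eqSum_inr] using h
  have hR1 : ∀ j k : Fin M,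
      P.u (loIdx j) (loIdx k) = star (P.u (hiIdx j) (hiIdx k)) := by
    intro j k
    have h := smul_cancel_of_ne_zero hq hrel3.2
    have h2 := congrArg (fun m : Matrix (Fin M) (Fin M) P.carrier => m j k) h
    simpa only [Matrix.toBlocks₁₁, Matrix.toBlocks₂₂, Matrix.map_apply,
      Matrix.submatrix_apply, Matrix.of_apply, eqSum_inl, eqSum_inr] using h2
  -- the quotient by the star ideal
  set I := starIdealSpan S₀ with hIdef
  have hI : IsStarIdeal I := isStarIdeal_span S₀
  let con : RingCon P.carrier :=
    { r := fun a b => a - b ∈ I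
      iseqv := ⟨fun a => by simpa using hI.1,
        fun {a b} h => by
          have h2 := (hI.2.2.1 (-1) _ h).1
          simpa [neg_sub] using h2,
        fun {a b c} h1 h2 => by
          have h3 := hI.2.1 _ _ h1 h2
          simpa using h3⟩
      mul' := fun {a b c d} h1 h2 => by
        have h3 := (hI.2.2.1 a _ h2).1
        have h4 := (hI.2.2.1 d _ h1).2
        have h5 := hI.2.1 _ _ h3 h4
        have he : a * (c - d) + (a - b) * d = a * c - b * d := by noncomm_ring
        rwa [he] at h5
      add' := fun {a b c d} h1 h2 => by
        have h3 := hI.2.1 _ _ h1 h2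
        have he : (a - b) + (c - d) = (a + c) - (b + d) := by noncomm_ring
        rwa [he] at h3 }
  have hconr : ∀ a b : P.carrier, con a b ↔ a - b ∈ I := fun a b => Iff.rfl
  letI instAlgQ : Algebra ℂ con.Quotient :=
    { toSMul := inferInstance
      algebraMap := con.mk'.comp (algebraMap ℂ P.carrier)
      commutes' := fun z x => by
        refine Quotient.inductionOn' x (fun a => ?_)
        show con.mk' (algebraMap ℂ P.carrier z) * con.mk' a
            = con.mk' a * con.mk' (algebraMap ℂ P.carrier z)
        rw [← map_mul, ← map_mul, Algebra.commutes]
      smul_def' := fun z x => by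
        refine Quotient.inductionOn' x (fun a => ?_)
        show con.mk' (z • a) = con.mk' (algebraMap ℂ P.carrier z) * con.mk' a
        rw [← map_mul, Algebra.smul_def] }
  letI instStarQ : StarRing con.Quotient :=
    { star := fun x => Quotient.liftOn' x (fun a => con.mk' (star a))
        (fun a b h => by
          have h2 := hI.2.2.2 _ h
          have h3 : star a - star b ∈ I := by simpa [star_sub] using h2
          exact (RingCon.eq con).2 h3)
      star_involutive := fun x => by
        refine Quotient.inductionOn' x (fun a => ?_)
        show con.mk' (star (star a)) = con.mk' a
        rw [star_star]
      star_mul := fun x y => by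
        refine Quotient.inductionOn₂' x y (fun a b => ?_)
        show con.mk' (star (a * b)) = con.mk' (star b) * con.mk' (star a)
        rw [← map_mul, star_mul]
      star_add := fun x y => by
        refine Quotient.inductionOn₂' x y (fun a b => ?_)
        show con.mk' (star (a + b)) = con.mk' (star a) + con.mk' (star b)
        rw [← map_add, star_add] }
  haveI instSMQ : StarModule ℂ con.Quotient :=
    ⟨fun z x => by
      refine Quotient.inductionOn' x (fun a => ?_)
      show con.mk' (star (z • a)) = star z • con.mk' (star a)
      rw [star_smul]
      rfl⟩
  let π : P.carrier →⋆ₐ[ℂ] con.Quotient :=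
    { toFun := fun a => con.mk' a
      map_one' := map_one con.mk'
      map_mul' := map_mul con.mk'
      map_zero' := map_zero con.mk'
      map_add' := map_add con.mk'
      commutes' := fun z => rfl
      map_star' := fun a => rfl }
  have hπ0 : ∀ a : P.carrier, π a = 0 ↔ a ∈ I := by
    intro a
    have h1 : π a = 0 ↔ (con.mk' a = con.mk' 0) := by
      rw [map_zero con.mk']
      exact Iff.rfl
    rw [h1, show (con.mk' a = con.mk' 0) ↔ con a 0 from RingCon.eq con, hconr, sub_zero]
  have hc0 : ∀ j k : Fin M, π (P.u (hiIdx j) (loIdx k)) = 0 := by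
    intro j k
    refine (hπ0 _).2 (subset_starIdealSpan S₀ ?_)
    exact ⟨hiIdx j, loIdx k, by simp [hiIdx], by simpa [loIdx] using k.isLt, rfl⟩
  have hb0 : ∀ j k : Fin M, π (P.u (loIdx j) (hiIdx k)) = 0 := by
    intro j k
    have h := congrArg (⇑π) (hR2 j k)
    rw [map_smul, map_smul, map_star, hc0 j k, star_zero, smul_zero] at h
    exact smul_cancel_of_ne_zero hc (by rw [smul_zero]; exact h)
  have hd : ∀ j k : Fin M,
      π (P.u (hiIdx j) (hiIdx k)) = star (π (P.u (loIdx j) (loIdx k))) := by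
    intro j k
    have hst : star (P.u (loIdx j) (loIdx k)) = P.u (hiIdx j) (hiIdx k) := by
      rw [hR1 j k, star_star]
    rw [← hst]
    exact map_star π _
  set w : Matrix (Fin M) (Fin M) con.Quotient :=
    fun j k => π (P.u (loIdx j) (loIdx k)) with hwdef
  have hW : (P.u.map ⇑π).submatrix ⇑(eqSum M) ⇑(eqSum M) =
      Matrix.fromBlocks w 0 0 (w.map star) := by
    ext j k
    rcases j with j | j <;> rcases k with k | k <;>
      simp only [Matrix.submatrix_apply, eqSum_inl, eqSum_inr, Matrix.map_apply,
        Matrix.fromBlocks_apply₁₁, Matrix.fromBlocks_apply₁₂, Matrix.fromBlocks_apply₂₁,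
        Matrix.fromBlocks_apply₂₂, Matrix.zero_apply]
    · rfl
    · exact hb0 j k
    · exact hc0 j k
    · exact hd j k
  have hOrthπ := orthRel_map π P.rel
  have hWU : Matrix.fromBlocks w 0 0 (w.map star) *
      (Matrix.fromBlocks w 0 0 (w.map star)).conjTranspose = 1 := by
    rw [← hW, Matrix.conjTranspose_submatrix, Matrix.submatrix_mul_equiv, hOrthπ.1,
      Matrix.submatrix_one_equiv]
  have hWU' : (Matrix.fromBlocks w 0 0 (w.map star)).conjTranspose *
      Matrix.fromBlocks w 0 0 (w.map star) = 1 := by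
    rw [← hW, Matrix.conjTranspose_submatrix, Matrix.submatrix_mul_equiv, hOrthπ.2.1,
      Matrix.submatrix_one_equiv]
  rw [← Matrix.fromBlocks_one, Matrix.fromBlocks_conjTranspose,
    Matrix.fromBlocks_multiply] at hWU hWU'
  simp only [Matrix.conjTranspose_zero, Matrix.mul_zero, Matrix.zero_mul, add_zero,
    zero_add, Matrix.fromBlocks_inj] at hWU hWU'
  have hBw : BiUnitary w := ⟨hWU.1, hWU'.1, hWU.2.2.2, hWU'.2.2.2⟩
  obtain ⟨ψQ, hψQ, -⟩ := B.universal con.Quotient w hBw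
  obtain ⟨χ, -, hχuniq⟩ := P.universal con.Quotient (P.u.map ⇑π) (orthRel_map π P.rel)
  have hπχ : π = χ := hχuniq _ (fun j k => rfl)
  have hcomp : ψQ.comp φ = χ := by
    refine hχuniq _ (fun j k => ?_)
    obtain ⟨sj, rfl⟩ := (eqSum M).surjective j
    obtain ⟨sk, rfl⟩ := (eqSum M).surjective k
    rw [StarAlgHom.comp_apply, hφ, hv, Matrix.submatrix_apply, Equiv.symm_apply_apply,
      Equiv.symm_apply_apply, hvb]
    rcases sj with j | j <;> rcases sk with k | k <;>
      simp only [Matrix.fromBlocks_apply₁₁, Matrix.fromBlocks_apply₁₂,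
        Matrix.fromBlocks_apply₂₁, Matrix.fromBlocks_apply₂₂, Matrix.zero_apply,
        Matrix.map_apply, eqSum_inl, eqSum_inr]
    · exact hψQ j k
    · rw [map_zero]; exact (hb0 j k).symm
    · rw [map_zero]; exact (hc0 j k).symm
    · rw [map_star, hψQ j k, hwdef]
      exact (hd j k).symm
  refine ⟨φ, hsurj, hφlo, Set.Subset.antisymm ?_ (starIdealSpan_subset hker_ideal hS₀ker)⟩
  intro a ha
  have h1 : π a = 0 := by
    have h2 : π a = ψQ (φ a) := by rw [hπχ, ← hcomp]; rfl
    rw [h2, show φ a = 0 from ha, map_zero]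
  exact (hπ0 a).1 h1
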